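/- Under the hypothesis φ(g_j) < 1 for all j, the partial connection operators ∇_{∂_{x_i}} preserve the Newton filtration: ∇_{∂_{x_i}}(N_α G) ⊂ N_α G for all i ∈ {1,...,r} and α ∈ ℚ. More precisely, ∇_{∂_{x_i}} N_α G₀ ⊂ τ(N_{α+1} G₀). -/

import Mathlib

open scoped BigOperators
set_option maxHeartbeats 1000000
set_option synthInstance.maxHeartbeats 400000

noncomputable section

/-- Laurent polynomials `ℂ[u₁,…,uₙ,u₁⁻¹,…,uₙ⁻¹]`. -/
abbrev LaurentK (n : ℕ) := AddMonoidAlgebra ℂ (Fin n → ℤ)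
/-- The parameter ring `ℂ[x₁,…,x_r]`. -/
abbrev CoeffR (r : ℕ) := MvPolynomial (Fin r) ℂ
/-- Laurent polynomials in `u` with coefficients in `ℂ[x]`. -/
abbrev LaurentKX (n r : ℕ) := AddMonoidAlgebra (CoeffR r) (Fin n → ℤ)

/-- Newton filtration value of a Laurent polynomial, given the finite set `S` of
supporting linear forms of the Newton boundary (the parameters `x` have weight 0). -/
def newtonPhi {R : Type} [CommRing R] {n : ℕ}
    (S : Finset ((Fin n → ℤ) →+ ℚ)) (g : AddMonoidAlgebra R (Fin n → ℤ)) : WithBot ℚ :=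
  g.coeff.support.sup fun a => S.sup fun L => ((L a : ℚ) : WithBot ℚ)

/-- The logarithmic derivative `u_i ∂/∂u_i`. -/
def thetaDeriv {R : Type} [CommRing R] {n : ℕ} (i : Fin n)
    (g : AddMonoidAlgebra R (Fin n → ℤ)) : AddMonoidAlgebra R (Fin n → ℤ) :=
  Finsupp.sum g.coeff fun a c => (AddMonoidAlgebra.single a ((a i) • c) : AddMonoidAlgebra R (Fin n → ℤ))

def inclK {n r : ℕ} (g : LaurentK n) : LaurentKX n r :=
  AddMonoidAlgebra.ofCoeff (Finsupp.mapRange (algebraMap ℂ (CoeffR r)) (map_zero _) g.coeff)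

/-- `F(u,x) = f(u) + ∑ x_j g_j(u)`. -/
def defF {n r : ℕ} (f : LaurentK n) (g : Fin r → LaurentK n) : LaurentKX n r :=
  inclK f + ∑ j, (AddMonoidAlgebra.single 0 (MvPolynomial.X j) : LaurentKX n r) * inclK (g j)

def evalT {n : ℕ} (u : Fin n → ℂˣ) (g : LaurentK n) : ℂ :=
  Finsupp.sum g.coeff fun a c => c * ∏ i, ((u i : ℂ) ^ (a i))

open Classical in
/-- Face part of `f` associated to a linear form `ℓ`. -/
def facePart {n : ℕ} (f : LaurentK n) (ℓ : (Fin n → ℤ) →+ ℚ) : LaurentK n :=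
  AddMonoidAlgebra.ofCoeff (Finsupp.filter (fun a => ∀ b ∈ f.coeff.support, ℓ b ≤ ℓ a) f.coeff)

/-- Kouchnirenko nondegeneracy w.r.t. the Newton polyhedron at infinity. -/
def Nondegenerate {n : ℕ} (f : LaurentK n) : Prop :=
  ∀ ℓ : (Fin n → ℤ) →+ ℚ, ℓ ≠ 0 → ∀ u : Fin n → ℂˣ,
    ∃ i, evalT u (thetaDeriv i (facePart f ℓ)) ≠ 0

def expR {n : ℕ} (a : Fin n → ℤ) : Fin n → ℝ := fun i => (a i : ℝ)

/-- `f` is convenient ("commode"): the origin lies in the interior of its Newton polyhedron. -/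
def Convenient {n : ℕ} (f : LaurentK n) : Prop :=
  (0 : Fin n → ℝ) ∈ interior (convexHull ℝ (expR '' (f.coeff.support : Set (Fin n → ℤ))))

def jacobianIdeal {n : ℕ} (f : LaurentK n) : Ideal (LaurentK n) :=
  Ideal.span (Set.range fun i => thetaDeriv i f)

/-- The global Milnor number `μ = dim_ℂ Ωⁿ(U)/df∧Ω^{n-1}(U)`. -/
def milnor {n : ℕ} (f : LaurentK n) : ℕ :=
  Module.finrank ℂ (LaurentK n ⧸ jacobianIdeal f)

/-- `S` consists of the supporting linear forms of the Newton polyhedron of `f`: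
the sublevel set `{φ ≤ 1}` is exactly the Newton polyhedron. -/
def SCompatible {n : ℕ} (S : Finset ((Fin n → ℤ) →+ ℚ)) (f : LaurentK n) : Prop :=
  ∀ g : LaurentK n, newtonPhi S g ≤ (1 : ℚ) ↔
    ∀ a ∈ g.coeff.support, expR a ∈ convexHull ℝ (expR '' (f.coeff.support : Set (Fin n → ℤ)))

/-- The ambient module `Ωⁿ(U)[x,θ,θ⁻¹]` for the Gauss–Manin system: an `n`-form is
identified with its coefficient on `du/u`, the exponent `(a, m)` stands for `u^a θ^m`
(`θ^m = τ^{-m}`). -/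
abbrev Amb (n r : ℕ) := AddMonoidAlgebra (CoeffR r) ((Fin n → ℤ) × ℤ)

/-- `ω θ^m` as element of the ambient module. -/
def emb {n r : ℕ} (w : LaurentKX n r) (m : ℤ) : Amb n r :=
  Finsupp.sum w.coeff fun a c => (AddMonoidAlgebra.single (a, m) c : Amb n r)

/-- `u_i ∂/∂u_i` on the ambient module. -/
def thetaDerivA {n r : ℕ} (i : Fin n) (v : Amb n r) : Amb n r :=
  Finsupp.sum v.coeff fun p c => (AddMonoidAlgebra.single p ((p.1 i) • c) : Amb n r)

/-- Generators of `(θ d_u − d_u F ∧) Ω^{n-1}(U)[x,θ,θ⁻¹]`. -/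
def relSet {n r : ℕ} (f : LaurentK n) (g : Fin r → LaurentK n) : Set (Amb n r) :=
  ⋃ i : Fin n, Set.range fun η : Amb n r =>
    (AddMonoidAlgebra.single ((0 : Fin n → ℤ), (1 : ℤ)) (1 : CoeffR r) : Amb n r)
        * thetaDerivA i η
      - emb (thetaDeriv i (defF f g)) 0 * η

def relSub {n r : ℕ} (f : LaurentK n) (g : Fin r → LaurentK n) :
    Submodule (CoeffR r) (Amb n r) :=
  Submodule.span (CoeffR r) (relSet f g)

/-- Newton weight on the ambient module: `u^a θ^m` has weight `φ(u^a) + m`. -/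
def ambWeight {n r : ℕ} (S : Finset ((Fin n → ℤ) →+ ℚ)) (v : Amb n r) : WithBot ℚ :=
  v.coeff.support.sup fun p => (S.sup fun L => ((L p.1 : ℚ) : WithBot ℚ)) + ((p.2 : ℚ) : WithBot ℚ)

/-- Representatives of the Brieskorn lattice `G₀ = Ωⁿ(U)[x,θ]`: only nonnegative
powers of `θ`. -/
def polySet (n r : ℕ) : Set (Amb n r) := {v | ∀ p ∈ v.coeff.support, (0:ℤ) ≤ Prod.snd p}

/-- The Newton filtration `N_α G` of the Gauss–Manin system. -/
def NG {n r : ℕ} (f : LaurentK n) (g : Fin r → LaurentK n)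
    (S : Finset ((Fin n → ℤ) →+ ℚ)) (α : ℚ) :
    Submodule (CoeffR r) (Amb n r ⧸ relSub f g) :=
  Submodule.span (CoeffR r) ((relSub f g).mkQ '' {v | ambWeight S v ≤ (α : WithBot ℚ)})

/-- The Newton filtration `N_α G₀` of the Brieskorn lattice. -/
def NG0 {n r : ℕ} (f : LaurentK n) (g : Fin r → LaurentK n)
    (S : Finset ((Fin n → ℤ) →+ ℚ)) (α : ℚ) :
    Submodule (CoeffR r) (Amb n r ⧸ relSub f g) :=
  Submodule.span (CoeffR r)
    ((relSub f g).mkQ '' ({v | ambWeight S v ≤ (α : WithBot ℚ)} ∩ polySet n r))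

/-- The Brieskorn lattice `G₀` inside the Gauss–Manin system `G`. -/
def G0sub {n r : ℕ} (f : LaurentK n) (g : Fin r → LaurentK n) :
    Submodule (CoeffR r) (Amb n r ⧸ relSub f g) :=
  Submodule.span (CoeffR r) ((relSub f g).mkQ '' polySet n r)

/-- `N_{<α} G`. -/
def NGlt {n r : ℕ} (f : LaurentK n) (g : Fin r → LaurentK n)
    (S : Finset ((Fin n → ℤ) →+ ℚ)) (α : ℚ) :
    Submodule (CoeffR r) (Amb n r ⧸ relSub f g) :=
  ⨆ β ∈ {β : ℚ | β < α}, NG f g S β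

/-- The Gauss–Manin connection `∇_{∂_{x_i}}`:
`∇(ω τ^p) = ∂_{x_i}(ω) τ^p − g_i ω τ^{p+1}`. -/
def pderivA {n r : ℕ} (i : Fin r) (v : Amb n r) : Amb n r :=
  AddMonoidAlgebra.ofCoeff (Finsupp.mapRange (MvPolynomial.pderiv i) (map_zero _) v.coeff)

def nablaX {n r : ℕ} (g : Fin r → LaurentK n) (i : Fin r) (v : Amb n r) : Amb n r :=
  pderivA i v - emb (inclK (g i)) (-1) * v

/-- `τ∇_{∂_τ}` : `τ∇_{∂_τ}(ωτ^p) = −Fωτ^{p+1} + pωτ^p`. -/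
def tauDtau {n r : ℕ} (f : LaurentK n) (g : Fin r → LaurentK n) (v : Amb n r) : Amb n r :=
  -(emb (defF f g) (-1) * v)
    + Finsupp.sum v.coeff fun p c => (AddMonoidAlgebra.single p ((-p.2) • c) : Amb n r)

/-- `∇_{∂_τ}(ωτ^p) = −Fωτ^p + pωτ^{p-1}`. -/
def dTau {n r : ℕ} (f : LaurentK n) (g : Fin r → LaurentK n) (v : Amb n r) : Amb n r :=
  -(emb (defF f g) 0 * v)
    + Finsupp.sum v.coeff fun p c => (AddMonoidAlgebra.single (p.1, p.2 + 1) ((-p.2) • c) : Amb n r)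

/-- Multiplication by `τ`. -/
def tauMul {n r : ℕ} (v : Amb n r) : Amb n r :=
  (AddMonoidAlgebra.single ((0 : Fin n → ℤ), (-1 : ℤ)) (1 : CoeffR r) : Amb n r) * v

/-- Multiplication by `θ`. -/
def thetaMul {n r : ℕ} (v : Amb n r) : Amb n r :=
  (AddMonoidAlgebra.single ((0 : Fin n → ℤ), (1 : ℤ)) (1 : CoeffR r) : Amb n r) * v

/-- `θ²∇_{∂_θ} = −θ · (τ∇_{∂_τ})`. -/
def thetaSqDtheta {n r : ℕ} (f : LaurentK n) (g : Fin r → LaurentK n) (v : Amb n r) :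
    Amb n r :=
  -(thetaMul (tauDtau f g v))

/-- Embedding of `ℂ[x,θ]` in the ambient module. -/
def embedP {n r : ℕ} (p : AddMonoidAlgebra (CoeffR r) ℕ) : Amb n r :=
  Finsupp.sum p.coeff fun m a =>
    (AddMonoidAlgebra.single ((0 : Fin n → ℤ), (m : ℤ)) a : Amb n r)

/-- Embedding of `ℂ[x,τ]` in the ambient module (`τ = θ⁻¹`). -/
def embedPtau {n r : ℕ} (p : AddMonoidAlgebra (CoeffR r) ℕ) : Amb n r :=
  Finsupp.sum p.coeff fun m a =>
    (AddMonoidAlgebra.single ((0 : Fin n → ℤ), -(m : ℤ)) a : Amb n r)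

section AuxLemmas

open Finsupp AddMonoidAlgebra

variable {n r : ℕ}

/-- pointwise weight of a monomial `u^a θ^m`. -/
def wfun (S : Finset ((Fin n → ℤ) →+ ℚ)) (p : (Fin n → ℤ) × ℤ) : WithBot ℚ :=
  (S.sup fun L => ((L p.1 : ℚ) : WithBot ℚ)) + ((p.2 : ℚ) : WithBot ℚ)

lemma ambWeight_def (S : Finset ((Fin n → ℤ) →+ ℚ)) (v : Amb n r) :
    ambWeight S v = v.coeff.support.sup (wfun S) := rfl

lemma ambWeight_le_iff {S : Finset ((Fin n → ℤ) →+ ℚ)} {v : Amb n r} {c : WithBot ℚ} :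
    ambWeight S v ≤ c ↔ ∀ p ∈ v.coeff.support, wfun S p ≤ c := Finset.sup_le_iff

lemma wfun_add_le (S : Finset ((Fin n → ℤ) →+ ℚ)) (p q : (Fin n → ℤ) × ℤ) :
    wfun S (p + q) ≤ wfun S p + wfun S q := by
  unfold wfun
  have h1 : (S.sup fun L => ((L (p + q).1 : ℚ) : WithBot ℚ)) ≤
      (S.sup fun L => ((L p.1 : ℚ) : WithBot ℚ)) +
        (S.sup fun L => ((L q.1 : ℚ) : WithBot ℚ)) := by
    refine Finset.sup_le fun L hL => ?_
    have he : ((L (p + q).1 : ℚ) : WithBot ℚ)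
        = ((L p.1 : ℚ) : WithBot ℚ) + ((L q.1 : ℚ) : WithBot ℚ) := by
      rw [Prod.fst_add, map_add, WithBot.coe_add]
    rw [he]
    exact add_le_add (Finset.le_sup (f := fun L => ((L p.1 : ℚ) : WithBot ℚ)) hL)
      (Finset.le_sup (f := fun L => ((L q.1 : ℚ) : WithBot ℚ)) hL)
  have h2 : (((p + q).2 : ℚ) : WithBot ℚ) = ((p.2 : ℚ) : WithBot ℚ) + ((q.2 : ℚ) : WithBot ℚ) := by
    rw [Prod.snd_add]; push_cast; rfl
  rw [h2]
  exact le_trans (add_le_add_left h1 _)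
    (le_of_eq (add_add_add_comm (S.sup fun L => ((L p.1 : ℚ) : WithBot ℚ))
      (S.sup fun L => ((L q.1 : ℚ) : WithBot ℚ)) ((p.2 : ℚ) : WithBot ℚ)
      ((q.2 : ℚ) : WithBot ℚ)))

lemma ambWeight_mul_le {S : Finset ((Fin n → ℤ) →+ ℚ)} {x y : Amb n r} {a b : WithBot ℚ}
    (hx : ambWeight S x ≤ a) (hy : ambWeight S y ≤ b) :
    ambWeight S (x * y) ≤ a + b := by
  classical
  rw [ambWeight_def]
  refine Finset.sup_le fun p hp => ?_
  have hp' := AddMonoidAlgebra.support_coeff_mul_subset x y hp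
  rw [Finset.mem_add] at hp'
  obtain ⟨q, hq, s, hs, rfl⟩ := hp'
  refine le_trans (wfun_add_le S q s) (add_le_add ?_ ?_)
  · exact le_trans (Finset.le_sup (f := wfun S) hq) hx
  · exact le_trans (Finset.le_sup (f := wfun S) hs) hy

lemma ambWeight_sub_le {S : Finset ((Fin n → ℤ) →+ ℚ)} {x y : Amb n r} {c : WithBot ℚ}
    (hx : ambWeight S x ≤ c) (hy : ambWeight S y ≤ c) :
    ambWeight S (x - y) ≤ c := by
  classical
  rw [ambWeight_def]
  refine Finset.sup_le fun p hp => ?_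
  have := Finsupp.support_sub (f := x.coeff) (g := y.coeff) hp
  rcases Finset.mem_union.1 this with h | h
  · exact le_trans (Finset.le_sup (f := wfun S) h) hx
  · exact le_trans (Finset.le_sup (f := wfun S) h) hy

lemma mem_support_emb {w : LaurentKX n r} {m : ℤ} {p : (Fin n → ℤ) × ℤ}
    (hp : p ∈ (emb (r := r) w m).coeff.support) : ∃ a ∈ w.coeff.support, p = (a, m) := by
  classical
  have h := Finsupp.support_sum (by unfold emb at hp; rw [AddMonoidAlgebra.coeff_finsuppSum] at hp; exact hp)
  rw [Finset.mem_biUnion] at h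
  obtain ⟨a, ha, hpa⟩ := h
  have := Finsupp.support_single_subset hpa
  rw [Finset.mem_singleton] at this
  exact ⟨a, ha, this⟩

lemma support_pderivA_subset {i : Fin r} {v : Amb n r} :
    (pderivA i v).coeff.support ⊆ v.coeff.support := Finsupp.support_mapRange (hf := map_zero _)

lemma support_inclK_subset {w : LaurentK n} :
    (inclK (r := r) w).coeff.support ⊆ w.coeff.support := Finsupp.support_mapRange (hf := map_zero _)

lemma ambWeight_pderivA_le {S : Finset ((Fin n → ℤ) →+ ℚ)} {i : Fin r} {v : Amb n r} :
    ambWeight S (pderivA i v) ≤ ambWeight S v := by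
  rw [ambWeight_def, ambWeight_def]
  exact Finset.sup_mono support_pderivA_subset

lemma ambWeight_emb_inclK_le {S : Finset ((Fin n → ℤ) →+ ℚ)} (w : LaurentK n) (m : ℤ) :
    ambWeight S (emb (r := r) (inclK w) m) ≤ newtonPhi S w + ((m : ℚ) : WithBot ℚ) := by
  rw [ambWeight_def]
  refine Finset.sup_le fun p hp => ?_
  obtain ⟨a, ha, rfl⟩ := mem_support_emb hp
  have ha' : a ∈ w.coeff.support := support_inclK_subset ha
  unfold wfun newtonPhi
  exact add_le_add_left
    (Finset.le_sup (f := fun a => S.sup fun L => ((L a : ℚ) : WithBot ℚ)) ha') _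

lemma wfun_zero_one {S : Finset ((Fin n → ℤ) →+ ℚ)} (hS : S.Nonempty) {m : ℤ} :
    wfun (n := n) S ((0 : Fin n → ℤ), m) = ((m : ℚ) : WithBot ℚ) := by
  unfold wfun
  have : (S.sup fun L => ((L (0 : Fin n → ℤ) : ℚ) : WithBot ℚ)) = ((0 : ℚ) : WithBot ℚ) := by
    simp only [map_zero]
    exact Finset.sup_const hS _
  rw [this, ← WithBot.coe_add, zero_add]

lemma ambWeight_single_le {S : Finset ((Fin n → ℤ) →+ ℚ)} (hS : S.Nonempty) (m : ℤ)
    (c : CoeffR r) :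
    ambWeight S (AddMonoidAlgebra.single ((0 : Fin n → ℤ), m) c : Amb n r)
      ≤ ((m : ℚ) : WithBot ℚ) := by
  rw [ambWeight_def]
  refine Finset.sup_le fun p hp => ?_
  have := Finsupp.support_single_subset hp
  rw [Finset.mem_singleton] at this
  subst this
  rw [wfun_zero_one hS]

lemma single_mul_emb (w : LaurentKX n r) (k m : ℤ) :
    (AddMonoidAlgebra.single ((0 : Fin n → ℤ), k) (1 : CoeffR r) : Amb n r) * emb w m
      = emb w (k + m) := by
  classical
  unfold emb
  rw [Finsupp.mul_sum]
  refine Finsupp.sum_congr fun a _ => ?_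
  rw [AddMonoidAlgebra.single_mul_single, one_mul]
  congr 1
  simp [Prod.ext_iff]

lemma tauMul_thetaMul (x : Amb n r) : tauMul (thetaMul x) = x := by
  unfold tauMul thetaMul
  rw [← mul_assoc, AddMonoidAlgebra.single_mul_single, one_mul]
  have : (((0 : Fin n → ℤ), (-1 : ℤ)) + ((0 : Fin n → ℤ), (1 : ℤ)))
      = ((0 : (Fin n → ℤ) × ℤ)) := by simp [Prod.ext_iff]
  rw [this, ← AddMonoidAlgebra.one_def, one_mul]

lemma nablaX_eq_tauMul (g : Fin r → LaurentK n) (i : Fin r) (v : Amb n r) :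
    nablaX g i v
      = tauMul (thetaMul (pderivA i v) - emb (inclK (g i)) 0 * v) := by
  unfold nablaX tauMul
  rw [mul_sub]
  refine congrArg₂ HSub.hSub ?_ ?_
  · exact (tauMul_thetaMul (pderivA i v)).symm
  · show emb (inclK (g i)) (-1) * v = _
    rw [← mul_assoc, single_mul_emb]
    norm_num

end AuxLemmas

/-- under the hypothesis `φ(g_j) < 1` for all `j`, the operators
`∇_{∂_{x_i}}` preserve the Newton filtration: `∇_{∂_{x_i}}(N_α G) ⊂ N_α G` for all `i, α`;
more precisely, `∇_{∂_{x_i}} N_α G₀ ⊂ τ(N_{α+1} G₀)`.  (Statements are phrased on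
representatives in the ambient module, `mkQ` being the projection onto `G`.) -/
theorem nabla_preserves_newton_filtration {n r : ℕ}
    (S : Finset ((Fin n → ℤ) →+ ℚ)) (hS : S.Nonempty)
    (f : LaurentK n) (g : Fin r → LaurentK n)
    (hSf : SCompatible S f) (hconv : Convenient f) (hnd : Nondegenerate f)
    (hg : ∀ j, newtonPhi S (g j) < ((1 : ℚ) : WithBot ℚ)) :
    (∀ (i : Fin r) (α : ℚ) (v : Amb n r), ambWeight S v ≤ (α : WithBot ℚ) →
      (relSub f g).mkQ (nablaX g i v) ∈ NG f g S α) ∧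
    (∀ (i : Fin r) (α : ℚ) (v : Amb n r),
      v ∈ {w | ambWeight S w ≤ (α : WithBot ℚ)} ∩ polySet n r →
      (relSub f g).mkQ (nablaX g i v) ∈
        Submodule.span (CoeffR r) ((relSub f g).mkQ ''
          (tauMul '' ({w | ambWeight S w ≤ ((α + 1 : ℚ) : WithBot ℚ)} ∩ polySet n r)))) := by
  classical
  constructor
  · -- Part 1 : `∇_{∂_{x_i}}` preserves `N_α G`.
    intro i α v hv
    have h1 : ambWeight S (nablaX g i v) ≤ (α : WithBot ℚ) := by
      unfold nablaX
      refine ambWeight_sub_le (le_trans ambWeight_pderivA_le hv) ?_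
      refine le_trans (ambWeight_mul_le (ambWeight_emb_inclK_le (S := S) (g i) (-1)) hv) ?_
      have h01 : newtonPhi S (g i) + ((((-1 : ℤ) : ℚ)) : WithBot ℚ) + (α : WithBot ℚ)
          ≤ ((1 : ℚ) : WithBot ℚ) + ((((-1 : ℤ) : ℚ)) : WithBot ℚ) + (α : WithBot ℚ) :=
        add_le_add_left (add_le_add_left (le_of_lt (hg i)) _) _
      refine le_trans h01 (le_of_eq ?_)
      rw [← WithBot.coe_add, ← WithBot.coe_add]
      norm_num
    exact Submodule.subset_span (Set.mem_image_of_mem _ h1)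
  · -- Part 2 : `∇_{∂_{x_i}} N_α G₀ ⊂ τ (N_{α+1} G₀)`.
    intro i α v hv
    obtain ⟨hv1, hv2⟩ := hv
    set w := thetaMul (pderivA i v) - emb (inclK (g i)) 0 * v with hw
    have hwW : ambWeight S w ≤ ((α + 1 : ℚ) : WithBot ℚ) := by
      refine ambWeight_sub_le ?_ ?_
      · unfold thetaMul
        refine le_trans (ambWeight_mul_le (ambWeight_single_le hS 1 1)
          (le_trans ambWeight_pderivA_le hv1)) (le_of_eq ?_)
        rw [← WithBot.coe_add]
        norm_num [add_comm]
      · refine le_trans (ambWeight_mul_le (ambWeight_emb_inclK_le (S := S) (g i) 0) hv1) ?_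
        have h01 : newtonPhi S (g i) + ((((0 : ℤ) : ℚ)) : WithBot ℚ) + (α : WithBot ℚ)
            ≤ ((1 : ℚ) : WithBot ℚ) + ((((0 : ℤ) : ℚ)) : WithBot ℚ) + (α : WithBot ℚ) :=
          add_le_add_left (add_le_add_left (le_of_lt (hg i)) _) _
        refine le_trans h01 (le_of_eq ?_)
        rw [← WithBot.coe_add, ← WithBot.coe_add]
        norm_num [add_comm]
    have hwP : w ∈ polySet n r := by
      intro p hp
      rcases Finset.mem_union.1 (by rw [AddMonoidAlgebra.coeff_sub] at hp; exact Finsupp.support_sub hp) with h | h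
      · unfold thetaMul at h
        obtain ⟨q, hq, s, hs, rfl⟩ := Finset.mem_add.1 (AddMonoidAlgebra.support_coeff_mul_subset _ _ h)
        have hq' : q = ((0 : Fin n → ℤ), (1 : ℤ)) :=
          Finset.mem_singleton.1 (Finsupp.support_single_subset hq)
        have hs' : (0 : ℤ) ≤ s.2 := hv2 s (support_pderivA_subset hs)
        subst hq'
        show (0 : ℤ) ≤ 1 + s.2
        omega
      · obtain ⟨q, hq, s, hs, rfl⟩ := Finset.mem_add.1 (AddMonoidAlgebra.support_coeff_mul_subset _ _ h)
        obtain ⟨a, _, rfl⟩ := mem_support_emb hq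
        have hs' : (0 : ℤ) ≤ s.2 := hv2 s hs
        show (0 : ℤ) ≤ 0 + s.2
        omega
    rw [nablaX_eq_tauMul g i v]
    exact Submodule.subset_span
      (Set.mem_image_of_mem _ (Set.mem_image_of_mem _ ⟨hwW, hwP⟩))

end
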